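/- arXiv:math/0610259 — 3 statements merged into one kernel-verified Lean document; each statement's English description precedes it below -/
import Mathlib

section
/- Let D be a domain in ℝ^N with D ≠ ℝ^N, N ≥ 2. Every Harnack function u : D → [0,∞) is quasi-nearly subharmonic in D. -/
open MeasureTheory Metric Set Filter
open scoped ENNReal NNReal Topology

noncomputable section

/-- `ℝ^N` with the Euclidean metric. -/
abbrev Eucl (N : ℕ) := EuclideanSpace ℝ (Fin N)

/-- The positive part of an extended real number, as an element of `ℝ≥0∞`. -/
noncomputable def ERealPos (x : EReal) : ℝ≥0∞ :=
  if x = ⊤ then ⊤ else ENNReal.ofReal x.toReal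

/-- The (extended-real valued) Lebesgue integral of an extended-real valued function:
the upper integral of its positive part minus the upper integral of its negative part. -/
noncomputable def eIntegral {α : Type*} [MeasurableSpace α] (μ : Measure α)
    (f : α → EReal) : EReal :=
  ((∫⁻ a, ERealPos (f a) ∂μ : ℝ≥0∞) : EReal) - ((∫⁻ a, ERealPos (-(f a)) ∂μ : ℝ≥0∞) : EReal)

/-- `u(x) ≤ (K/(ν_N r^N)) ∫_{B(x,r)} u dm_N`; note that `ν_N r^N` is exactly the Lebesgue
measure of the ball `B^N(x,r)`. -/
def MeanIneqAt {N : ℕ} (K : ℝ) (u : Eucl N → EReal) (x : Eucl N) (r : ℝ) : Prop :=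
  u x ≤ ((K / (volume (ball x r)).toReal : ℝ) : EReal) *
    eIntegral (volume.restrict (ball x r)) u

/-- The mean value inequality with constant `K`, for all closed balls contained in `D`. -/
def MeanIneqOn {N : ℕ} (K : ℝ) (u : Eucl N → EReal) (D : Set (Eucl N)) : Prop :=
  ∀ x : Eucl N, ∀ r : ℝ, 0 < r → closedBall x r ⊆ D → MeanIneqAt K u x r

/-- `u⁺ ∈ L¹_loc(D)`: the positive part of `u` is integrable on every compact subset of `D`. -/
def PosPartLocInt {N : ℕ} (u : Eucl N → EReal) (D : Set (Eucl N)) : Prop :=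
  ∀ C : Set (Eucl N), C ⊆ D → IsCompact C → (∫⁻ x in C, ERealPos (u x) ∂volume) < ⊤

/-- `u ∈ L¹_loc(D)` for an extended-real valued `u`. -/
def ERealLocInt {N : ℕ} (u : Eucl N → EReal) (D : Set (Eucl N)) : Prop :=
  PosPartLocInt u D ∧ PosPartLocInt (fun x => -(u x)) D

/-- `u` is nearly subharmonic on `D`. -/
def NearlySubharmonicOn {N : ℕ} (u : Eucl N → EReal) (D : Set (Eucl N)) : Prop :=
  AEMeasurable u (volume.restrict D) ∧ PosPartLocInt u D ∧ MeanIneqOn 1 u D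

/-- `u` is `K`-quasi-nearly subharmonic n.s. (in the narrow sense) on `D`. -/
def QNSubharmonicNSOn {N : ℕ} (K : ℝ) (u : Eucl N → EReal) (D : Set (Eucl N)) : Prop :=
  AEMeasurable u (volume.restrict D) ∧ PosPartLocInt u D ∧ MeanIneqOn K u D

/-- `u_M := max{u, -M} + M`. -/
noncomputable def shiftPos {N : ℕ} (u : Eucl N → EReal) (M : ℝ) : Eucl N → EReal :=
  fun x => max (u x) ((-M : ℝ) : EReal) + ((M : ℝ) : EReal)

/-- `u` is `K`-quasi-nearly subharmonic on `D`. -/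
def QNSubharmonicOn {N : ℕ} (K : ℝ) (u : Eucl N → EReal) (D : Set (Eucl N)) : Prop :=
  AEMeasurable u (volume.restrict D) ∧ PosPartLocInt u D ∧
    ∀ M : ℝ, 0 ≤ M → MeanIneqOn K (shiftPos u M) D

/-- `u` is subharmonic on `D`: upper semicontinuous and satisfying the mean value
inequality on all closed balls contained in `D` (the constant `-∞` is allowed). -/
def SubharmonicOn {N : ℕ} (u : Eucl N → EReal) (D : Set (Eucl N)) : Prop :=
  UpperSemicontinuousOn u D ∧ MeanIneqOn 1 u D

/-- `h` is harmonic on `D`: continuous and satisfying the mean value equality. -/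
def HarmonicMVOn {N : ℕ} (h : Eucl N → ℝ) (D : Set (Eucl N)) : Prop :=
  ContinuousOn h D ∧ ∀ x : Eucl N, ∀ r : ℝ, 0 < r → closedBall x r ⊆ D →
    h x = ⨍ y in ball x r, h y ∂volume

/-- The Δ₂-condition for a function on `[0,∞)`. -/
def Delta2 (φ : ℝ → ℝ) : Prop :=
  ∃ C ≥ (1 : ℝ), ∀ t ≥ (0 : ℝ), φ (2 * t) ≤ C * φ t

/-- Permissible functions `ψ : [0,∞) → [0,∞)`. -/
def Permissible (ψ : ℝ → ℝ) : Prop :=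
  ∃ ψ₁ ψ₂ : ℝ → ℝ,
    (∀ t ≥ (0 : ℝ), 0 ≤ ψ₁ t) ∧ MonotoneOn ψ₁ (Ici 0) ∧ ConvexOn ℝ (Ici 0) ψ₁ ∧
    Delta2 ψ₁ ∧
    (∀ t ≥ (0 : ℝ), 0 ≤ ψ₂ t) ∧ StrictMonoOn ψ₂ (Ici 0) ∧
    (∀ s ≥ (0 : ℝ), ∃ t ≥ (0 : ℝ), ψ₂ t = s) ∧
    (∃ C ≥ (1 : ℝ), ∀ s a b : ℝ, 0 ≤ s → 0 ≤ a → 0 ≤ b →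
      ψ₂ a = s → ψ₂ b = 2 * s → b ≤ C * a) ∧
    (∃ C > (0 : ℝ), ∀ s t : ℝ, 0 ≤ s → s ≤ t → C * (ψ₂ t / t) ≤ ψ₂ s / s) ∧
    (∀ t ≥ (0 : ℝ), ψ t = ψ₂ (ψ₁ t))

/-- `ψ` is non-constant on `[0,∞)`. -/
def NonConstantOnNonneg (ψ : ℝ → ℝ) : Prop :=
  ∃ s ≥ (0 : ℝ), ∃ t ≥ (0 : ℝ), ψ s ≠ ψ t

/-- `u` is a `λ`-Harnack function on `D`. -/
def HarnackOn {N : ℕ} (lam : ℝ) (u : Eucl N → ℝ) (D : Set (Eucl N)) : Prop :=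
  ContinuousOn u D ∧ (∀ x ∈ D, 0 ≤ u x) ∧
    ∃ C ≥ (1 : ℝ), ∀ x : Eucl N, ∀ r : ℝ, 0 < r → closedBall x r ⊆ D →
      ∀ z₁ ∈ closedBall x (lam * r), ∀ z₂ ∈ closedBall x (lam * r), u z₁ ≤ C * u z₂

/-- Lebesgue measure of the unit ball in `ℝ^N`. -/
noncomputable def unitBallVol (N : ℕ) : ℝ := (volume (ball (0 : Eucl N) 1)).toReal

/-- Identify `ℝ^m × ℝ^n` with `ℝ^(m+n)`. -/
noncomputable def joinE {m n : ℕ} (x : Eucl m) (y : Eucl n) : Eucl (m + n) :=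
  (EuclideanSpace.equiv (Fin (m + n)) ℝ).symm
    (Fin.append (EuclideanSpace.equiv (Fin m) ℝ x) (EuclideanSpace.equiv (Fin n) ℝ y))

/-- The section `Ω(y) = {x ∈ ℝ^m : (x,y) ∈ Ω}`. -/
def secY {m n : ℕ} (Ω : Set (Eucl (m + n))) (y : Eucl n) : Set (Eucl m) :=
  {x : Eucl m | joinE x y ∈ Ω}

/-- The section `Ω(x) = {y ∈ ℝ^n : (x,y) ∈ Ω}`. -/
def secX {m n : ℕ} (Ω : Set (Eucl (m + n))) (x : Eucl m) : Set (Eucl n) :=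
  {y : Eucl n | joinE x y ∈ Ω}

lemma ERealPos_coe (a : ℝ) : ERealPos ((a : ℝ) : EReal) = ENNReal.ofReal a := by
  simp [ERealPos]

lemma EReal_coe_max (a b : ℝ) : ((max a b : ℝ) : EReal) = max (a : EReal) (b : EReal) := by
  rcases le_total a b with h | h <;>
    simp [max_eq_right, max_eq_left, h, EReal.coe_le_coe_iff]

/-- on a domain `D ⊊ ℝ^N`, every Harnack function is quasi-nearly subharmonic. -/
theorem harnack_qns
    {N : ℕ} (hN : 2 ≤ N) (D : Set (Eucl N)) (hDopen : IsOpen D) (hDconn : IsConnected D)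
    (hDne : D ≠ univ) (u : Eucl N → ℝ)
    (hu : ∃ lam : ℝ, 0 < lam ∧ lam < 1 ∧ HarnackOn lam u D) :
    ∃ K ≥ (1 : ℝ), QNSubharmonicOn K (fun x => ((u x : ℝ) : EReal)) D := by
  haveI : Nonempty (Fin N) := ⟨⟨0, by omega⟩⟩
  haveI : Nontrivial (Eucl N) := inferInstance
  obtain ⟨lam, hlam0, hlam1, hcont, hpos, C, hC1, hH⟩ := hu
  have hC0 : (0 : ℝ) < C := lt_of_lt_of_le one_pos hC1
  have hlamN : (0 : ℝ) < lam ^ N := pow_pos hlam0 N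
  have hlamN1 : lam ^ N ≤ 1 := pow_le_one₀ hlam0.le hlam1.le
  set K : ℝ := C / lam ^ N with hK
  have hK1 : 1 ≤ K := by
    have : C / 1 ≤ C / lam ^ N := by
      apply div_le_div_of_nonneg_left hC0.le hlamN hlamN1
    calc (1 : ℝ) ≤ C := hC1
      _ = C / 1 := by ring
      _ ≤ K := this
  refine ⟨K, hK1, ?_, ?_, ?_⟩
  · -- AEMeasurable
    exact continuous_coe_real_ereal.measurable.comp_aemeasurable
      (hcont.aemeasurable hDopen.measurableSet)
  · -- PosPartLocInt
    intro Cs hsub hcomp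
    obtain ⟨b, hb⟩ := hcomp.exists_bound_of_continuousOn (hcont.mono hsub)
    calc ∫⁻ x in Cs, ERealPos ((u x : ℝ) : EReal) ∂volume
        = ∫⁻ x in Cs, ENNReal.ofReal (u x) ∂volume := by
          simp only [ERealPos_coe]
      _ ≤ ∫⁻ _x in Cs, ENNReal.ofReal b ∂volume :=
          setLIntegral_mono' hcomp.measurableSet (fun x hx =>
            ENNReal.ofReal_le_ofReal (le_trans (le_abs_self _) (hb x hx)))
      _ = ENNReal.ofReal b * volume Cs := setLIntegral_const _ _
      _ < ⊤ := ENNReal.mul_lt_top ENNReal.ofReal_lt_top hcomp.measure_lt_top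
  · -- mean inequality for shiftPos
    intro M hM x r hr hball
    set v : Eucl N → ℝ := fun y => max (u y) (-M) + M with hv
    have hv0 : ∀ y, 0 ≤ v y := fun y => by
      have : -M ≤ max (u y) (-M) := le_max_right _ _
      simp only [hv]; linarith
    have hshift : ∀ y, shiftPos (fun z => ((u z : ℝ) : EReal)) M y = ((v y : ℝ) : EReal) := by
      intro y
      simp only [shiftPos, hv]
      rw [EReal.coe_add, EReal_coe_max]
    -- Harnack in the small ball
    have hvD : ∀ y ∈ closedBall x r, v y = u y + M := by
      intro y hy
      have : 0 ≤ u y := hpos y (hball hy)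
      simp only [hv, max_eq_left (by linarith : -M ≤ u y)]
    have hxmem : x ∈ closedBall x (lam * r) :=
      mem_closedBall_self (by positivity)
    have hharn : ∀ z ∈ ball x (lam * r), v x / C ≤ v z := by
      intro z hz
      have hzball : z ∈ closedBall x (lam * r) := ball_subset_closedBall hz
      have hsubr : closedBall x (lam * r) ⊆ closedBall x r :=
        closedBall_subset_closedBall (by nlinarith)
      have huz : 0 ≤ u z := hpos z (hball (hsubr hzball))
      have h1 : u x ≤ C * u z := hH x r hr hball x hxmem z hzball
      rw [hvD x (mem_closedBall_self hr.le), hvD z (hsubr hzball)]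
      rw [div_le_iff₀ hC0]
      nlinarith
    -- volumes
    have hV0 : (0 : ℝ≥0∞) < volume (ball x r) := measure_ball_pos _ _ hr
    have hVfin : volume (ball x r) < ⊤ := measure_ball_lt_top
    set V : ℝ := (volume (ball x r)).toReal with hVdef
    have hVpos : 0 < V := ENNReal.toReal_pos hV0.ne' hVfin.ne
    have hsmall : volume (ball x (lam * r)) = ENNReal.ofReal (lam ^ N) * volume (ball x r) := by
      rw [Measure.addHaar_ball volume x (by positivity), Measure.addHaar_ball volume x hr.le,
        finrank_euclideanSpace_fin, mul_pow, ENNReal.ofReal_mul (by positivity), mul_assoc]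
    -- lintegral lower bound
    set Lp : ℝ≥0∞ := ∫⁻ y in ball x r, ENNReal.ofReal (v y) ∂volume with hLp
    have hlow : ENNReal.ofReal (v x / C) * volume (ball x (lam * r)) ≤ Lp := by
      calc ENNReal.ofReal (v x / C) * volume (ball x (lam * r))
          = ∫⁻ _y in ball x (lam * r), ENNReal.ofReal (v x / C) ∂volume :=
            (setLIntegral_const _ _).symm
        _ ≤ ∫⁻ y in ball x (lam * r), ENNReal.ofReal (v y) ∂volume :=
            setLIntegral_mono' measurableSet_ball (fun z hz =>
              ENNReal.ofReal_le_ofReal (hharn z hz))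
        _ ≤ Lp := lintegral_mono_set (ball_subset_ball (by nlinarith))
    have hmain : ENNReal.ofReal (v x) ≤ ENNReal.ofReal (K / V) * Lp := by
      calc ENNReal.ofReal (v x)
          = ENNReal.ofReal (K / V) * (ENNReal.ofReal (v x / C) *
              (ENNReal.ofReal (lam ^ N) * ENNReal.ofReal V)) := by
            rw [show ENNReal.ofReal (lam ^ N) * ENNReal.ofReal V
                = ENNReal.ofReal (lam ^ N * V) from (ENNReal.ofReal_mul (by positivity)).symm,
              show ENNReal.ofReal (v x / C) * ENNReal.ofReal (lam ^ N * V)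
                = ENNReal.ofReal (v x / C * (lam ^ N * V)) from
                (ENNReal.ofReal_mul (div_nonneg (hv0 x) hC0.le)).symm,
              show ENNReal.ofReal (K / V) * ENNReal.ofReal (v x / C * (lam ^ N * V))
                = ENNReal.ofReal (K / V * (v x / C * (lam ^ N * V))) from
                (ENNReal.ofReal_mul (div_nonneg (by linarith) hVpos.le)).symm]
            congr 1
            field_simp [hK]
            rw [hK, mul_assoc, div_mul_cancel₀ _ hlamN.ne']
        _ = ENNReal.ofReal (K / V) * (ENNReal.ofReal (v x / C) * volume (ball x (lam * r))) := by
            rw [hsmall, ENNReal.ofReal_toReal hVfin.ne]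
        _ ≤ ENNReal.ofReal (K / V) * Lp := by
            exact mul_le_mul_right hlow _
    -- compute eIntegral
    have hneg : (∫⁻ y in ball x r,
        ERealPos (-(shiftPos (fun z => ((u z : ℝ) : EReal)) M y)) ∂volume) = 0 := by
      have : ∀ y, ERealPos (-(shiftPos (fun z => ((u z : ℝ) : EReal)) M y)) = 0 := by
        intro y
        rw [hshift y, ← EReal.coe_neg, ERealPos_coe, ENNReal.ofReal_eq_zero]
        linarith [hv0 y]
      simp [this]
    have hposInt : (∫⁻ y in ball x r,
        ERealPos (shiftPos (fun z => ((u z : ℝ) : EReal)) M y) ∂volume) = Lp := by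
      rw [hLp]
      refine lintegral_congr fun y => ?_
      rw [hshift y, ERealPos_coe]
    rw [MeanIneqAt, eIntegral, hneg, hposInt, hshift x]
    rw [EReal.coe_ennreal_zero, sub_zero]
    have hKV : (0 : ℝ) ≤ K / V := by positivity
    calc ((v x : ℝ) : EReal)
        = ((ENNReal.ofReal (v x) : ℝ≥0∞) : EReal) := by
          rw [EReal.coe_ennreal_ofReal, max_eq_left (hv0 x)]
      _ ≤ ((ENNReal.ofReal (K / V) * Lp : ℝ≥0∞) : EReal) :=
          EReal.coe_ennreal_le_coe_ennreal_iff.mpr hmain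
      _ = ((K / V : ℝ) : EReal) * (Lp : EReal) := by
          rw [EReal.coe_ennreal_mul, EReal.coe_ennreal_ofReal, max_eq_left hKV]
end
end

section
/- Let D be a domain in ℝ^N, N ≥ 2, and K ≥ 1. Let 𝓕 be a family of K-quasi-nearly subharmonic (respectively K-quasi-nearly subharmonic n.s.) functions on D and let w := sup_{u ∈ 𝓕} u. If w is Lebesgue measurable and w⁺ ∈ L¹_loc(D), then w is K-quasi-nearly subharmonic (respectively K-quasi-nearly subharmonic n.s.) in D. -/
open MeasureTheory Metric Set Filter
open scoped ENNReal NNReal Topology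

noncomputable section

lemma ERealPos_mono {x y : EReal} (h : x ≤ y) : ERealPos x ≤ ERealPos y := by
  rcases eq_or_ne y ⊤ with hy | hy
  · simp [ERealPos, hy]
  · have hx : x ≠ ⊤ := fun h' => hy (top_le_iff.mp (h' ▸ h))
    simp only [ERealPos, if_neg hx, if_neg hy]
    rcases eq_or_ne x ⊥ with hb | hb
    · simp [hb]
    · exact ENNReal.ofReal_le_ofReal (EReal.toReal_le_toReal h hb hy)

lemma ERealPos_neg_of_nonneg {x : EReal} (h : 0 ≤ x) : ERealPos (-x) = 0 := by
  have hx : -x ≠ ⊤ := by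
    simp only [ne_eq, EReal.neg_eq_top_iff]
    rintro rfl; simp at h
  simp only [ERealPos, if_neg hx]
  rw [ENNReal.ofReal_eq_zero]
  induction x with
  | bot => simp at h
  | coe a =>
      have : (0:ℝ) ≤ a := EReal.coe_nonneg.mp h
      rw [← EReal.coe_neg, EReal.toReal_coe]; linarith
  | top => simp

lemma eIntegral_mono {α : Type*} [MeasurableSpace α] (μ : Measure α)
    {f g : α → EReal} (h : ∀ a, f a ≤ g a) : eIntegral μ f ≤ eIntegral μ g := by
  unfold eIntegral
  refine EReal.sub_le_sub ?_ ?_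
  · exact_mod_cast lintegral_mono fun a => ERealPos_mono (h a)
  · exact_mod_cast lintegral_mono fun a => ERealPos_mono (EReal.neg_le_neg_iff.mpr (h a))

lemma eIntegral_nonneg {α : Type*} [MeasurableSpace α] (μ : Measure α)
    {f : α → EReal} (h : ∀ a, 0 ≤ f a) : 0 ≤ eIntegral μ f := by
  unfold eIntegral
  have h0 : ∀ a, ERealPos (-(f a)) = 0 := fun a => ERealPos_neg_of_nonneg (h a)
  simp only [h0, lintegral_const, zero_mul, EReal.coe_ennreal_zero, sub_zero]
  exact EReal.coe_ennreal_nonneg _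

lemma shiftPos_nonneg {N : ℕ} (u : Eucl N → EReal) {M : ℝ} (hM : 0 ≤ M) (x : Eucl N) :
    0 ≤ shiftPos u M x := by
  unfold shiftPos
  calc (0 : EReal) = ((-M : ℝ) : EReal) + ((M : ℝ) : EReal) := by norm_cast; ring
  _ ≤ max (u x) ((-M : ℝ) : EReal) + ((M : ℝ) : EReal) :=
      add_le_add_left (le_max_right _ _) _

/-- the pointwise supremum `w` of a family of `K`-quasi-nearly subharmonic
(resp. n.s.) functions is again such, provided `w` is measurable and `w⁺ ∈ L¹_loc(D)`. -/
theorem qns_sup_family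
    {N : ℕ} (hN : 2 ≤ N) (D : Set (Eucl N)) (hDopen : IsOpen D) (hDconn : IsConnected D)
    (K : ℝ) (hK : 1 ≤ K) (F : Set (Eucl N → EReal))
    (hw_top : ∀ x ∈ D, (⨆ u ∈ F, u x) ≠ ⊤)
    (hw_meas : AEMeasurable (fun x => ⨆ u ∈ F, u x) (volume.restrict D))
    (hw_loc : PosPartLocInt (fun x => ⨆ u ∈ F, u x) D) :
    ((∀ u ∈ F, QNSubharmonicOn K u D) →
      QNSubharmonicOn K (fun x => ⨆ u ∈ F, u x) D) ∧
    ((∀ u ∈ F, QNSubharmonicNSOn K u D) →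
      QNSubharmonicNSOn K (fun x => ⨆ u ∈ F, u x) D) := by
  set w : Eucl N → EReal := fun x => ⨆ u ∈ F, u x with hw
  have hwle : ∀ u ∈ F, ∀ y, u y ≤ w y := fun u hu y => le_iSup₂ (f := fun u _ => u y) u hu
  have hKnn : (0 : ℝ) ≤ K := by linarith
  constructor
  · intro hF
    refine ⟨hw_meas, hw_loc, ?_⟩
    intro M hM x r hr hball
    set c : ℝ := K / (volume (ball x r)).toReal with hc
    have hcnn : (0 : ℝ) ≤ c := div_nonneg hKnn ENNReal.toReal_nonneg
    have hcnn' : (0 : EReal) ≤ (c : EReal) := by exact_mod_cast hcnn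
    set T : EReal := ((c : EReal)) * eIntegral (volume.restrict (ball x r)) (shiftPos w M)
      with hT
    have hWmono : ∀ u ∈ F, ∀ y, shiftPos u M y ≤ shiftPos w M y := fun u hu y =>
      add_le_add_left (max_le_max (hwle u hu y) le_rfl) _
    have hTu : ∀ u ∈ F, shiftPos u M x ≤ T := by
      intro u hu
      refine ((hF u hu).2.2 M hM x r hr hball).trans ?_
      exact mul_le_mul_of_nonneg_left
        (eIntegral_mono _ (fun y => hWmono u hu y)) hcnn'
    have hT0 : (0 : EReal) ≤ T :=
      mul_nonneg hcnn' (eIntegral_nonneg _ (fun y => shiftPos_nonneg w hM y))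
    show shiftPos w M x ≤ T
    unfold shiftPos
    rw [← max_add_add_right]
    refine max_le ?_ ?_
    · -- w x + M ≤ T
      rw [← EReal.le_sub_iff_add_le (Or.inl (by simp)) (Or.inl (by simp))]
      refine iSup₂_le fun u hu => ?_
      rw [EReal.le_sub_iff_add_le (Or.inl (by simp)) (Or.inl (by simp))]
      calc u x + ((M : ℝ) : EReal) ≤ max (u x) ((-M : ℝ) : EReal) + ((M : ℝ) : EReal) :=
            add_le_add_left (le_max_left _ _) _
        _ ≤ T := hTu u hu
    · calc ((-M : ℝ) : EReal) + ((M : ℝ) : EReal) = (0 : EReal) := by norm_cast; ring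
        _ ≤ T := hT0
  · intro hF
    refine ⟨hw_meas, hw_loc, ?_⟩
    intro x r hr hball
    set c : ℝ := K / (volume (ball x r)).toReal with hc
    have hcnn' : (0 : EReal) ≤ (c : EReal) := by
      exact_mod_cast div_nonneg hKnn ENNReal.toReal_nonneg
    show w x ≤ ((c : ℝ) : EReal) * eIntegral (volume.restrict (ball x r)) w
    refine iSup₂_le fun u hu => ?_
    refine ((hF u hu).2.2 x r hr hball).trans ?_
    exact mul_le_mul_of_nonneg_left (eIntegral_mono _ (fun y => hwle u hu y)) hcnn'
end
end

section
/- Let D be a domain in ℝ^N, N ≥ 2. If u : D → [-∞,∞) is quasi-nearly subharmonic n.s., then either u ≡ −∞ or u is finite almost everywhere in D and u ∈ L¹_loc(D). -/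
open MeasureTheory Metric Set Filter
open scoped ENNReal NNReal Topology

noncomputable section

lemma measurable_ERealPos' : Measurable ERealPos := by
  unfold ERealPos
  exact Measurable.ite (measurableSet_eq) measurable_const
    (ENNReal.measurable_ofReal.comp measurable_ereal_toReal)

/-- a quasi-nearly subharmonic n.s. function on a domain is either `≡ -∞`
or finite almost everywhere and locally integrable. -/
theorem qnsNS_loc_integrable
    {N : ℕ} (hN : 2 ≤ N) (D : Set (Eucl N)) (hDopen : IsOpen D) (hDconn : IsConnected D)
    (u : Eucl N → EReal) (hu_top : ∀ x ∈ D, u x ≠ ⊤)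
    (hu : ∃ K ≥ (1 : ℝ), QNSubharmonicNSOn K u D) :
    (∀ x ∈ D, u x = ⊥) ∨
      ((∀ᵐ x ∂(volume.restrict D), u x ≠ ⊥) ∧ ERealLocInt u D) := by
  classical
  obtain ⟨K, hK1, humeas, hupos, hmean⟩ := hu
  have hDmeas : MeasurableSet D := hDopen.measurableSet
  set f : Eucl N → ℝ≥0∞ := fun x => ERealPos (-(u x)) with hfdef
  have hfm : Measurable (fun e : EReal => ERealPos (-e)) :=
    measurable_ERealPos'.comp measurable_neg
  -- Key step A: infinite negative-part integral on a ball forces `u x = ⊥`.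
  have keyA : ∀ (x : Eucl N) (r : ℝ), 0 < r → closedBall x r ⊆ D →
      (∫⁻ y in ball x r, f y ∂volume) = ⊤ → u x = ⊥ := by
    intro x r hr hsub hint
    have hle := hmean x r hr hsub
    rw [MeanIneqAt] at hle
    have hvol0 : (0:ℝ) < (volume (ball x r)).toReal :=
      ENNReal.toReal_pos (measure_ball_pos volume x hr).ne' measure_ball_lt_top.ne
    have hc : (0:ℝ) < K / (volume (ball x r)).toReal :=
      div_pos (lt_of_lt_of_le one_pos hK1) hvol0
    have hEI : eIntegral (volume.restrict (ball x r)) u = ⊥ := by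
      unfold eIntegral
      rw [show (∫⁻ a in ball x r, ERealPos (-(u a)) ∂volume) = ⊤ from hint,
        EReal.coe_ennreal_top, EReal.sub_top]
    rw [hEI, EReal.coe_mul_bot_of_pos hc] at hle
    exact le_bot_iff.mp hle
  set S : Set (Eucl N) := {x | x ∈ D ∧ ∀ r : ℝ, 0 < r → closedBall x r ⊆ D →
      (∫⁻ y in ball x r, f y ∂volume) = ⊤} with hSdef
  set E : Set (Eucl N) := {x | ∃ r : ℝ, 0 < r ∧ closedBall x r ⊆ D ∧
      (∫⁻ y in ball x r, f y ∂volume) < ⊤} with hEdef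
  -- Key step B: around a point of `S`, `u ≡ ⊥` and the ball is contained in `S`.
  have keyB : ∀ x ∈ S, ∃ r : ℝ, 0 < r ∧ ball x (r/4) ⊆ S ∧
      ∀ y ∈ ball x (r/4), u y = ⊥ := by
    rintro x ⟨hxD, hxS⟩
    obtain ⟨ε, hε, hballD⟩ := Metric.isOpen_iff.mp hDopen x hxD
    set r := ε/2 with hrdef
    have hr : 0 < r := by positivity
    have hcbD : closedBall x r ⊆ D := by
      intro z hz
      refine hballD (mem_ball.mpr (lt_of_le_of_lt (mem_closedBall.mp hz) ?_))
      rw [hrdef]; linarith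
    have hsmall : closedBall x (r/4) ⊆ D :=
      (closedBall_subset_closedBall (by linarith)).trans hcbD
    have hI4 : (∫⁻ y in ball x (r/4), f y ∂volume) = ⊤ :=
      hxS (r/4) (by positivity) hsmall
    have ubot : ∀ y ∈ ball x (r/4), u y = ⊥ := by
      intro y hy
      have hyx : dist y x < r/4 := mem_ball.mp hy
      have hsub1 : closedBall y (r/2) ⊆ D := by
        intro z hz
        apply hcbD
        rw [mem_closedBall] at hz ⊢
        calc dist z x ≤ dist z y + dist y x := dist_triangle _ _ _
          _ ≤ r := by linarith
      have hsub2 : ball x (r/4) ⊆ ball y (r/2) := by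
        intro z hz
        rw [mem_ball] at hz ⊢
        calc dist z y ≤ dist z x + dist x y := dist_triangle _ _ _
          _ < r/2 := by rw [dist_comm x y]; linarith
      refine keyA y (r/2) (by positivity) hsub1 (top_le_iff.mp ?_)
      calc (⊤:ℝ≥0∞) = ∫⁻ z in ball x (r/4), f z ∂volume := hI4.symm
        _ ≤ ∫⁻ z in ball y (r/2), f z ∂volume :=
            lintegral_mono' (Measure.restrict_mono hsub2 le_rfl) le_rfl
    refine ⟨r, hr, ?_, ubot⟩
    intro y hy
    refine ⟨hsmall (ball_subset_closedBall hy), ?_⟩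
    intro ρ hρ hsubρ
    set T := ball y ρ ∩ ball x (r/4) with hT
    have hTopen : IsOpen T := isOpen_ball.inter isOpen_ball
    have hTne : T.Nonempty := ⟨y, mem_ball_self hρ, hy⟩
    have hTpos : volume T ≠ 0 := (hTopen.measure_pos volume hTne).ne'
    have hTtop : (∫⁻ z in T, f z ∂volume) = ⊤ := by
      have hcong : ∫⁻ z in T, f z ∂volume = ∫⁻ _ in T, (⊤:ℝ≥0∞) ∂volume := by
        refine setLIntegral_congr_fun hTopen.measurableSet ?_
        intro z hz
        have hz' : u z = ⊥ := ubot z hz.2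
        simp [hfdef, hz', ERealPos]
      rw [hcong, setLIntegral_const, ENNReal.top_mul hTpos]
    refine top_le_iff.mp ?_
    calc (⊤:ℝ≥0∞) = ∫⁻ z in T, f z ∂volume := hTtop.symm
      _ ≤ ∫⁻ z in ball y ρ, f z ∂volume :=
          lintegral_mono' (Measure.restrict_mono Set.inter_subset_left le_rfl) le_rfl
  have hSopen : IsOpen S := by
    rw [Metric.isOpen_iff]
    intro x hx
    obtain ⟨r, hr, hSsub, -⟩ := keyB x hx
    exact ⟨r/4, by positivity, hSsub⟩
  have hEopen : IsOpen E := by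
    rw [Metric.isOpen_iff]
    intro x hx
    obtain ⟨r, hr, hsub, hfin⟩ := hx
    refine ⟨r/4, by positivity, ?_⟩
    intro y hy
    have hyx : dist y x < r/4 := mem_ball.mp hy
    refine ⟨r/2, by positivity, ?_, ?_⟩
    · intro z hz
      apply hsub
      rw [mem_closedBall] at hz ⊢
      calc dist z x ≤ dist z y + dist y x := dist_triangle _ _ _
        _ ≤ r := by linarith
    · refine lt_of_le_of_lt (lintegral_mono' (Measure.restrict_mono ?_ le_rfl) le_rfl) hfin
      intro z hz
      rw [mem_ball] at hz ⊢
      calc dist z x ≤ dist z y + dist y x := dist_triangle _ _ _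
        _ < r := by linarith
  have hdisj : Disjoint S E := by
    rw [Set.disjoint_left]
    rintro x ⟨hxD, hxS⟩ ⟨r, hr, hsub, hfin⟩
    exact hfin.ne (hxS r hr hsub)
  have hcover : D ⊆ S ∪ E := by
    intro x hxD
    by_cases hE : x ∈ E
    · exact Or.inr hE
    · left
      refine ⟨hxD, fun r hr hsub => ?_⟩
      by_contra hne
      exact hE ⟨r, hr, hsub, lt_top_iff_ne_top.mpr hne⟩
  rcases IsPreconnected.subset_or_subset hSopen hEopen hdisj hcover
      hDconn.isPreconnected with hDS | hDE
  · left
    intro x hx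
    obtain ⟨r, hr, -, hub⟩ := keyB x (hDS hx)
    exact hub x (mem_ball_self (by positivity))
  · right
    choose rr hrr hsubr hfinr using fun i : D => (hDE i.2)
    set B : D → Set (Eucl N) := fun i => ball (i : Eucl N) (rr i) with hBdef
    have hBopen : ∀ i, IsOpen (B i) := fun i => isOpen_ball
    have hBD : ∀ i, B i ⊆ D := fun i => ball_subset_closedBall.trans (hsubr i)
    have hmemB : ∀ x (hx : x ∈ D), x ∈ B ⟨x, hx⟩ := fun x hx => mem_ball_self (hrr _)
    have hnull : ∀ i : D, volume ({x | u x = ⊥} ∩ B i) = 0 := by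
      intro i
      have hrest : volume.restrict (B i) = (volume.restrict D).restrict (B i) := by
        rw [Measure.restrict_restrict (hBopen i).measurableSet,
          Set.inter_eq_self_of_subset_left (hBD i)]
      have haem : AEMeasurable f (volume.restrict (B i)) := by
        rw [hrest]
        exact hfm.comp_aemeasurable humeas.restrict
      have hae := ae_lt_top' haem (hfinr i).ne
      rw [ae_iff, Measure.restrict_apply' (hBopen i).measurableSet] at hae
      have hsubset : {x | u x = ⊥} ⊆ {y | ¬ f y < ⊤} := by
        intro x hx
        simp only [mem_setOf_eq, not_lt, top_le_iff] at hx ⊢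
        simp [hfdef, hx, ERealPos]
      exact measure_mono_null (Set.inter_subset_inter_left _ hsubset) hae
    constructor
    · obtain ⟨T, hTc, hTeq⟩ := TopologicalSpace.isOpen_iUnion_countable B hBopen
      have hDcov : D ⊆ ⋃ i ∈ T, B i := by
        rw [hTeq]
        intro x hx
        exact Set.mem_iUnion.mpr ⟨⟨x, hx⟩, hmemB x hx⟩
      rw [ae_iff]
      have hset : {x | ¬ u x ≠ ⊥} = {x | u x = ⊥} := by simp
      rw [hset, Measure.restrict_apply' hDmeas]
      refine measure_mono_null (fun x hx => ?_)
        ((measure_biUnion_null_iff hTc).mpr fun i _ => hnull i)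
      obtain ⟨hx1, hx2⟩ := hx
      obtain ⟨i, hiT, hiB⟩ := Set.mem_iUnion₂.mp (hDcov hx2)
      exact Set.mem_biUnion hiT ⟨hx1, hiB⟩
    · refine ⟨hupos, ?_⟩
      intro C hC hCc
      have hcovC : C ⊆ ⋃ i : D, B i := fun x hx =>
        Set.mem_iUnion.mpr ⟨⟨x, hC hx⟩, hmemB x (hC hx)⟩
      obtain ⟨F, hF⟩ := hCc.elim_finite_subcover B hBopen hcovC
      have h1 : (∫⁻ x in C, ERealPos (-(u x)) ∂volume)
          ≤ ∑ i ∈ F, ∫⁻ x in B i, f x ∂volume := by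
        calc (∫⁻ x in C, ERealPos (-(u x)) ∂volume)
            ≤ ∫⁻ x in ⋃ i ∈ F, B i, f x ∂volume :=
              lintegral_mono' (Measure.restrict_mono hF le_rfl) le_rfl
          _ = ∫⁻ x in ⋃ i ∈ (↑F : Set D), B i, f x ∂volume := by
              rw [Finset.set_biUnion_coe]
          _ = ∫⁻ x in ⋃ i : (↑F : Set D), B i, f x ∂volume := by
              rw [Set.biUnion_eq_iUnion]
          _ ≤ ∑' i : (↑F : Set D), ∫⁻ x in B (i : D), f x ∂volume :=
              lintegral_iUnion_le _ _
          _ = ∑ i ∈ F, ∫⁻ x in B i, f x ∂volume := Finset.tsum_subtype' F (fun i => ∫⁻ x in B i, f x ∂volume)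
      exact lt_of_le_of_lt h1 (ENNReal.sum_lt_top.mpr fun i _ => hfinr i)
end
end
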